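/- Let Γ be a uniform ranked poset whose maximum element x has rank d+1 (so Γ = Γ_x), and let R = R(Γ). For every 0 ≤ k < d, the set {s ∈ R(k,k) : r_x(d−k−1)·s = 0} equals the one-dimensional subspace F·r_x(d−k) (in particular r_x(d−k) ≠ 0 in R); moreover R(d,d) = F·r_x is one-dimensional. Equivalently, H^k(R(·,k), d_Γ) ≅ F for all 0 ≤ k ≤ d. -/

import Mathlib

set_option linter.unusedSectionVars false
set_option linter.unusedVariables false

open scoped Classical

variable {Γ : Type*} [PartialOrder Γ] [OrderBot Γ] [Fintype Γ]

/-- `rk` is a rank function for the finite poset `Γ` (with least element `⊥`):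
the bottom has rank `0` and ranks increase by one along covering relations.
Equivalently, all maximal chains in `[⊥, x]` have the same length `rk x`. -/
def IsRanked (rk : Γ → ℕ) : Prop :=
  rk ⊥ = 0 ∧ ∀ a b : Γ, a ⋖ b → rk b = rk a + 1

/-- `rankSet rk x n` is the set `S_x(n) = {y ≤ x : rk x - rk y = n}`. -/
def rankSet (rk : Γ → ℕ) (x : Γ) (n : ℕ) : Set Γ := {y | y ≤ x ∧ rk y + n = rk x}

/-- `Γ` is uniform: for each `a`, the equivalence relation on `S_a(1)` generated by
`b ∼ c` whenever `S_b(1) ∩ S_c(1) ≠ ∅` has at most one equivalence class. -/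
def Uniform (rk : Γ → ℕ) : Prop :=
  ∀ a b c : Γ, b ∈ rankSet rk a 1 → c ∈ rankSet rk a 1 →
    Relation.EqvGen
      (fun u v => u ∈ rankSet rk a 1 ∧ v ∈ rankSet rk a 1 ∧
        (rankSet rk u 1 ∩ rankSet rk v 1).Nonempty)
      b c

/-- `Γ' = Γ \ {⊥}`, indexing the generators `r_x`. -/
abbrev Vert (Γ : Type*) [PartialOrder Γ] [OrderBot Γ] := {x : Γ // x ≠ (⊥ : Γ)}

variable (F : Type*) [Field F]

/-- The generator `r_x` of the tensor algebra `T(W)` on the vector space `W` with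
basis `{r_x : x ∈ Γ'}`, realized as the free algebra on `Γ'`. -/
noncomputable def gen (x : Vert Γ) : FreeAlgebra F (Vert Γ) := FreeAlgebra.ι F x

/-- `r_x(n) = Σ_{y ∈ S_x(n)} r_y ∈ W` (which is `0` for `n ≥ rk x`). -/
noncomputable def rxn (rk : Γ → ℕ) (x : Γ) (n : ℕ) : FreeAlgebra F (Vert Γ) :=
  ∑ y ∈ Finset.univ.filter (fun y : Vert Γ => y.1 ∈ rankSet rk x n), gen F y

/-- The quadratic relations spanning `I_2`: `r_x ⊗ r_y` for `y ∉ S_x(1)`, and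
`r_x ⊗ r_x(1)`, for `x, y ∈ Γ'`. -/
inductive GRel (F : Type*) [Field F] {Γ : Type*} [PartialOrder Γ] [OrderBot Γ]
    [Fintype Γ] (rk : Γ → ℕ) :
    FreeAlgebra F (Vert Γ) → FreeAlgebra F (Vert Γ) → Prop
  | mono (x y : Vert Γ) (h : y.1 ∉ rankSet rk x.1 1) : GRel F rk (gen F x * gen F y) 0
  | adj (x : Vert Γ) : GRel F rk (gen F x * rxn F rk x.1 1) 0

/-- The quadratic algebra `R(Γ) = T(W)/I`, where `I` is the two-sided ideal
generated by `I_2`. -/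
abbrev RGamma (rk : Γ → ℕ) := RingQuot (GRel F rk)

/-- The image of `r_x` in `R(Γ)`. -/
noncomputable def rbar (rk : Γ → ℕ) (x : Vert Γ) : RGamma F rk :=
  RingQuot.mkAlgHom F (GRel F rk) (gen F x)

/-- The image of `r_x(n)` in `R(Γ)`. -/
noncomputable def rxnbar (rk : Γ → ℕ) (x : Γ) (n : ℕ) : RGamma F rk :=
  RingQuot.mkAlgHom F (GRel F rk) (rxn F rk x n)

/-- The right ideal `r_x R = {r_x · s : s ∈ R}`, as an `F`-submodule of `R(Γ)`. -/
noncomputable def rIdeal (rk : Γ → ℕ) (x : Vert Γ) : Submodule F (RGamma F rk) :=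
  LinearMap.range (LinearMap.mulLeft F (rbar F rk x))

/-- `H_x(n) = Σ_{y ∈ Γ', y ∉ S_x(n)} r_y R`. -/
noncomputable def Hsub (rk : Γ → ℕ) (x : Γ) (n : ℕ) : Submodule F (RGamma F rk) :=
  ⨆ (y : Vert Γ) (_ : y.1 ∉ rankSet rk x n), rIdeal F rk y

/-- `d_Γ = Σ_{y ∈ Γ'} r_y ∈ R(Γ)`. -/
noncomputable def dGamma (rk : Γ → ℕ) : RGamma F rk := ∑ y : Vert Γ, rbar F rk y

/-- The degree-one component `W` of `T(W)`: the span of the generators `r_x`. -/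
noncomputable def Wsub : Submodule F (FreeAlgebra F (Vert Γ)) :=
  Submodule.span F (Set.range (gen F (Γ := Γ)))

/-- The graded component `R_m` of `R(Γ)`: the image of `W^{⊗m}`. -/
noncomputable def Rcomp (rk : Γ → ℕ) (m : ℕ) : Submodule F (RGamma F rk) :=
  Submodule.map (RingQuot.mkAlgHom F (GRel F rk)).toLinearMap ((Wsub F (Γ := Γ)) ^ m)

/-- The subspace `R(n,k) = Σ_{y ∈ Γ', rk y = n+1} r_y R_{n-k}` of `R(Γ)`. -/
noncomputable def Rnk (rk : Γ → ℕ) (n k : ℕ) : Submodule F (RGamma F rk) :=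
  ⨆ (y : Vert Γ) (_ : rk y.1 = n + 1),
    Submodule.map (LinearMap.mulLeft F (rbar F rk y)) (Rcomp F rk (n - k))

section AuxOrder

variable {rk : Γ → ℕ}

lemma aux_exists_le_covBy {a b : Γ} (h : a < b) : ∃ c, a ≤ c ∧ c ⋖ b := by
  classical
  have hne : (Finset.univ.filter (fun c : Γ => a ≤ c ∧ c < b)).Nonempty :=
    ⟨a, by simp [h]⟩
  obtain ⟨m, hm, hmax⟩ := Finset.exists_maximal hne
  simp only [Finset.mem_filter, Finset.mem_univ, true_and] at hm
  refine ⟨m, hm.1, hm.2, fun u hu hub => ?_⟩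
  exact lt_irrefl _ (lt_of_lt_of_le hu (hmax (by simp [le_trans hm.1 hu.le, hub]) hu.le))

lemma aux_exists_covBy_le {a b : Γ} (h : a < b) : ∃ c, a ⋖ c ∧ c ≤ b := by
  classical
  have hne : (Finset.univ.filter (fun c : Γ => a < c ∧ c ≤ b)).Nonempty :=
    ⟨b, by simp [h]⟩
  obtain ⟨m, hm, hmin⟩ := Finset.exists_minimal hne
  simp only [Finset.mem_filter, Finset.mem_univ, true_and] at hm
  refine ⟨m, ⟨hm.1, fun u hu hum => ?_⟩, hm.2⟩
  exact lt_irrefl _ (lt_of_lt_of_le hum (hmin (by simp [hu, le_trans hum.le hm.2]) hum.le))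

lemma aux_rk_lt (hrk : IsRanked rk) : ∀ b a : Γ, a < b → rk a < rk b := by
  intro b
  induction b using WellFoundedLT.induction with
  | ind b IH =>
    intro a hab
    obtain ⟨c, hac, hcb⟩ := aux_exists_le_covBy hab
    have hc : rk b = rk c + 1 := hrk.2 c b hcb
    rcases eq_or_lt_of_le hac with rfl | hlt
    · omega
    · have := IH c hcb.1 a hlt
      omega

lemma aux_rankSet_zero (hrk : IsRanked rk) {x y : Γ} :
    y ∈ rankSet rk x 0 ↔ y = x := by
  constructor
  · rintro ⟨hle, hr⟩
    rcases eq_or_lt_of_le hle with rfl | hlt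
    · rfl
    · exact absurd (aux_rk_lt hrk x y hlt) (by omega)
  · rintro rfl; exact ⟨le_rfl, by omega⟩

lemma aux_ne_bot (hrk : IsRanked rk) {y : Γ} (h : rk y ≠ 0) : y ≠ ⊥ := by
  rintro rfl; exact h hrk.1

lemma aux_exists_rank (hrk : IsRanked rk) :
    ∀ (j : ℕ) (x : Γ) (m : ℕ), m + j = rk x → ∃ y, y ≤ x ∧ rk y = m := by
  intro j
  induction j with
  | zero => intro x m hm; exact ⟨x, le_rfl, by omega⟩
  | succ j IH =>
    intro x m hm
    have hxb : (⊥ : Γ) < x := by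
      rcases eq_or_lt_of_le (bot_le (a := x)) with rfl | h
      · exact absurd hrk.1 (by omega)
      · exact h
    obtain ⟨c, _, hcx⟩ := aux_exists_le_covBy hxb
    have hc : rk x = rk c + 1 := hrk.2 c x hcx
    obtain ⟨y, hy, hyr⟩ := IH c m (by omega)
    exact ⟨y, le_trans hy hcx.1.le, hyr⟩

lemma aux_rankSet_step (hrk : IsRanked rk) {x z y : Γ} {n : ℕ}
    (hz : z ∈ rankSet rk x n) (hy : y ∈ rankSet rk z 1) :
    y ∈ rankSet rk x (n + 1) := by
  obtain ⟨hz1, hz2⟩ := hz; obtain ⟨hy1, hy2⟩ := hy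
  exact ⟨le_trans hy1 hz1, by omega⟩

/-- The key combinatorial consequence of uniformity. -/
lemma aux_uniform_const {F : Type*} (hrk : IsRanked rk) (hU : Uniform rk)
    (x : Γ) (hx : ∀ y : Γ, y ≤ x) :
    ∀ (n : ℕ) (c : Γ → F),
      (∀ z ∈ rankSet rk x n, ∀ u ∈ rankSet rk z 1, ∀ v ∈ rankSet rk z 1, c u = c v) →
      ∀ y ∈ rankSet rk x (n + 1), ∀ y' ∈ rankSet rk x (n + 1), c y = c y' := by
  intro n
  induction n with
  | zero =>
    intro c hc y hy y' hy'
    exact hc x (by exact ⟨le_rfl, by omega⟩) y hy y' hy'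
  | succ n IH =>
    intro c hc y hy y' hy'
    -- define f on the level n+1
    set f : Γ → F := fun z => if h : (rankSet rk z 1).Nonempty then c h.choose else c x with hf
    have hfz : ∀ z ∈ rankSet rk x (n + 1), ∀ w ∈ rankSet rk z 1, f z = c w := by
      intro z hz w hw
      have hne : (rankSet rk z 1).Nonempty := ⟨w, hw⟩
      have : f z = c hne.choose := by simp [hf, hne]
      rw [this]
      exact hc z hz _ hne.choose_spec w hw
    -- f is locally constant at level n
    have hfc : ∀ a ∈ rankSet rk x n, ∀ u ∈ rankSet rk a 1, ∀ v ∈ rankSet rk a 1,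
        f u = f v := by
      intro a ha u hu v hv
      have key : ∀ p q : Γ, Relation.EqvGen
          (fun u v => u ∈ rankSet rk a 1 ∧ v ∈ rankSet rk a 1 ∧
            (rankSet rk u 1 ∩ rankSet rk v 1).Nonempty) p q → f p = f q := by
        intro p q h
        induction h with
        | rel p q hpq =>
          obtain ⟨hp, hq, w, hw1, hw2⟩ := hpq
          have e1 := hfz p (aux_rankSet_step hrk ha hp) w hw1
          have e2 := hfz q (aux_rankSet_step hrk ha hq) w hw2
          rw [e1, e2]
        | refl p => rfl
        | symm p q _ ih => exact ih.symm
        | trans p q r _ _ ih1 ih2 => exact ih1.trans ih2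
      exact key u v (hU a u v hu hv)
    -- apply IH to f
    have hconst := IH f hfc
    -- parents
    have hpar : ∀ w ∈ rankSet rk x (n + 2), ∃ z ∈ rankSet rk x (n + 1), w ∈ rankSet rk z 1 := by
      intro w hw
      obtain ⟨hwle, hwr⟩ := hw
      have hwx : w < x := by
        rcases eq_or_lt_of_le (hx w) with rfl | h
        · exact absurd hwr (by omega)
        · exact h
      obtain ⟨z, hwz, hzx⟩ := aux_exists_covBy_le hwx
      have hz : rk z = rk w + 1 := hrk.2 w z hwz
      exact ⟨z, ⟨hzx, by omega⟩, ⟨hwz.1.le, by omega⟩⟩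
    obtain ⟨z, hz, hyz⟩ := hpar y hy
    obtain ⟨z', hz', hyz'⟩ := hpar y' hy'
    calc c y = f z := (hfz z hz y hyz).symm
      _ = f z' := hconst z hz z' hz'
      _ = c y' := hfz z' hz' y' hyz'

end AuxOrder
section AuxRep

variable {F}

/-- Linear functional `w ↦ ∑ b, cf b * w b`. -/
noncomputable def auxDot (cf : Vert Γ → F) : (Vert Γ → F) →ₗ[F] F :=
  ∑ b : Vert Γ, cf b • LinearMap.proj b

lemma auxDot_apply (cf w : Vert Γ → F) : auxDot cf w = ∑ b : Vert Γ, cf b * w b := by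
  simp [auxDot, LinearMap.sum_apply]

variable (F) in
/-- The representation of the generators on `F × (Vert Γ → F) × F`. -/
noncomputable def auxL (t : Vert Γ × Vert Γ → F) (z : Vert Γ) :
    Module.End F (F × (Vert Γ → F) × F) :=
  LinearMap.prod 0 <| LinearMap.prod
    ((LinearMap.fst F F ((Vert Γ → F) × F)).smulRight (Pi.single z 1))
    ((auxDot (fun b => t (z, b))).comp
      ((LinearMap.fst F (Vert Γ → F) F).comp (LinearMap.snd F F ((Vert Γ → F) × F))))

lemma auxL_apply (t : Vert Γ × Vert Γ → F) (z : Vert Γ) (p : F × (Vert Γ → F) × F) :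
    auxL F t z p = (0, p.1 • (Pi.single z 1 : Vert Γ → F), ∑ b : Vert Γ, t (z, b) * p.2.1 b) := by
  simp [auxL, auxDot_apply]

lemma auxL_comp_apply (t : Vert Γ × Vert Γ → F) (z y : Vert Γ) (p : F × (Vert Γ → F) × F) :
    auxL F t z (auxL F t y p) = (0, 0, p.1 * t (z, y)) := by
  rw [auxL_apply, auxL_apply]
  refine Prod.ext rfl (Prod.ext (by simp) ?_)
  simp only [Pi.smul_apply, Pi.single_apply, smul_eq_mul, mul_ite, mul_one, mul_zero]
  rw [Finset.sum_ite_eq' Finset.univ y (fun b => t (z, b) * p.1)]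
  simp [mul_comm]

variable (F) in
noncomputable def auxφ (t : Vert Γ × Vert Γ → F) :
    FreeAlgebra F (Vert Γ) →ₐ[F] Module.End F (F × (Vert Γ → F) × F) :=
  FreeAlgebra.lift F (auxL F t)

lemma auxφ_gen (t : Vert Γ × Vert Γ → F) (z : Vert Γ) :
    auxφ F t (gen F z) = auxL F t z := by
  simp [auxφ, gen, FreeAlgebra.lift_ι_apply]

lemma auxφ_rel (rk : Γ → ℕ) (t : Vert Γ × Vert Γ → F)
    (ht1 : ∀ a b : Vert Γ, t (a, b) ≠ 0 → b.1 ∈ rankSet rk a.1 1)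
    (ht2 : ∀ a : Vert Γ,
      ∑ b ∈ Finset.univ.filter (fun b : Vert Γ => b.1 ∈ rankSet rk a.1 1), t (a, b) = 0) :
    ∀ ⦃u v⦄, GRel F rk u v → auxφ F t u = auxφ F t v := by
  intro u v h
  cases h with
  | mono a b hb =>
    rw [map_mul, map_zero, auxφ_gen, auxφ_gen]
    apply LinearMap.ext; intro p
    rw [Module.End.mul_apply, auxL_comp_apply]
    have ht : t (a, b) = 0 := by
      by_contra h'; exact hb (ht1 _ _ h')
    simp [ht]
  | adj a =>
    rw [map_mul, map_zero, rxn, map_sum, auxφ_gen]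
    apply LinearMap.ext; intro p
    rw [Module.End.mul_apply, LinearMap.sum_apply]
    simp only [auxφ_gen]
    rw [map_sum]
    have : ∀ b ∈ Finset.univ.filter (fun b : Vert Γ => b.1 ∈ rankSet rk a.1 1),
        auxL F t a (auxL F t b p) = (0, 0, p.1 * t (a, b)) := fun b _ => auxL_comp_apply ..
    rw [Finset.sum_congr rfl this, LinearMap.zero_apply]
    refine Prod.ext ?_ (Prod.ext ?_ ?_)
    · simp [Prod.fst_sum]
    · simp [Prod.fst_sum, Prod.snd_sum]
    · simp only [Prod.snd_sum, ← Finset.mul_sum, ht2 a, mul_zero]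
      simp

end AuxRep
section AuxMain

variable {F}

lemma aux_rxnbar_sum (rk : Γ → ℕ) (w : Γ) (m : ℕ) :
    rxnbar F rk w m
      = ∑ y ∈ Finset.univ.filter (fun y : Vert Γ => y.1 ∈ rankSet rk w m),
          rbar F rk y := by
  rw [rxnbar, rxn, map_sum]
  rfl

variable (F) in
noncomputable def auxΦ (rk : Γ → ℕ) (t : Vert Γ × Vert Γ → F)
    (ht1 : ∀ a b : Vert Γ, t (a, b) ≠ 0 → b.1 ∈ rankSet rk a.1 1)
    (ht2 : ∀ a : Vert Γ,
      ∑ b ∈ Finset.univ.filter (fun b : Vert Γ => b.1 ∈ rankSet rk a.1 1), t (a, b) = 0) :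
    RGamma F rk →ₐ[F] Module.End F (F × (Vert Γ → F) × F) :=
  RingQuot.liftAlgHom F ⟨auxφ F t, auxφ_rel rk t ht1 ht2⟩

lemma auxΦ_rbar (rk : Γ → ℕ) (t : Vert Γ × Vert Γ → F) (ht1) (ht2) (y : Vert Γ) :
    auxΦ F rk t ht1 ht2 (rbar F rk y) = auxL F t y := by
  rw [rbar, auxΦ, RingQuot.liftAlgHom_mkAlgHom_apply, auxφ_gen]

lemma aux_rbar_ne (rk : Γ → ℕ) (y : Vert Γ) : rbar F rk y ≠ 0 := by
  intro h0
  have ht1 : ∀ a b : Vert Γ, (0 : Vert Γ × Vert Γ → F) (a, b) ≠ 0 → b.1 ∈ rankSet rk a.1 1 :=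
    fun a b h => absurd rfl h
  have ht2 : ∀ a : Vert Γ,
      ∑ b ∈ Finset.univ.filter (fun b : Vert Γ => b.1 ∈ rankSet rk a.1 1),
        (0 : Vert Γ × Vert Γ → F) (a, b) = 0 := fun a => by simp
  have h1 := congrArg (auxΦ F rk 0 ht1 ht2) h0
  rw [auxΦ_rbar, map_zero] at h1
  have h2 := congrArg (fun g : Module.End F (F × (Vert Γ → F) × F) =>
    (g ((1 : F), 0, 0)).2.1 y) h1
  simp [auxL_apply, Pi.single_apply] at h2

lemma aux_rxnbar_ne (rk : Γ → ℕ) (w : Γ) (m : ℕ)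
    (hne : ∃ y : Vert Γ, y.1 ∈ rankSet rk w m) : rxnbar F rk w m ≠ 0 := by
  obtain ⟨y₀, hy₀⟩ := hne
  intro h0
  have ht1 : ∀ a b : Vert Γ, (0 : Vert Γ × Vert Γ → F) (a, b) ≠ 0 → b.1 ∈ rankSet rk a.1 1 :=
    fun a b h => absurd rfl h
  have ht2 : ∀ a : Vert Γ,
      ∑ b ∈ Finset.univ.filter (fun b : Vert Γ => b.1 ∈ rankSet rk a.1 1),
        (0 : Vert Γ × Vert Γ → F) (a, b) = 0 := fun a => by simp
  have h1 := congrArg (auxΦ F rk 0 ht1 ht2) h0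
  rw [aux_rxnbar_sum, map_sum, map_zero] at h1
  simp only [auxΦ_rbar] at h1
  have h2 := congrArg (fun g : Module.End F (F × (Vert Γ → F) × F) =>
    (g ((1 : F), 0, 0)).2.1 y₀) h1
  simp only [LinearMap.sum_apply, auxL_apply, LinearMap.zero_apply] at h2
  rw [Prod.snd_sum, Prod.fst_sum] at h2
  simp [Finset.sum_apply, Pi.single_apply, Finset.sum_ite_eq', hy₀] at h2

/-- Degree-2 coefficient extraction. -/
lemma aux_coeff (rk : Γ → ℕ) (x : Vert Γ) (n : ℕ) (c : Vert Γ → F)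
    (hrk : IsRanked rk) (z₀ y₁ y₂ : Vert Γ)
    (hz : z₀.1 ∈ rankSet rk x.1 n)
    (h1 : y₁.1 ∈ rankSet rk z₀.1 1) (h2 : y₂.1 ∈ rankSet rk z₀.1 1)
    (hker : rxnbar F rk x.1 n *
      (∑ y ∈ Finset.univ.filter (fun y : Vert Γ => y.1 ∈ rankSet rk x.1 (n + 1)),
        c y • rbar F rk y) = 0) :
    c y₁ = c y₂ := by
  classical
  set T := Finset.univ.filter (fun y : Vert Γ => y.1 ∈ rankSet rk x.1 (n + 1)) with hT
  set Z := Finset.univ.filter (fun y : Vert Γ => y.1 ∈ rankSet rk x.1 n) with hZ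
  have hy₁T : y₁ ∈ T := by
    simp only [hT, Finset.mem_filter, Finset.mem_univ, true_and]
    exact aux_rankSet_step hrk hz h1
  have hy₂T : y₂ ∈ T := by
    simp only [hT, Finset.mem_filter, Finset.mem_univ, true_and]
    exact aux_rankSet_step hrk hz h2
  have hz₀Z : z₀ ∈ Z := by
    simp only [hZ, Finset.mem_filter, Finset.mem_univ, true_and]; exact hz
  set t : Vert Γ × Vert Γ → F := fun p =>
    (if p.1 = z₀ ∧ p.2 = y₁ then 1 else 0) - (if p.1 = z₀ ∧ p.2 = y₂ then 1 else 0) with htdef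
  have ht1 : ∀ a b : Vert Γ, t (a, b) ≠ 0 → b.1 ∈ rankSet rk a.1 1 := by
    intro a b h
    by_cases hb1 : a = z₀ ∧ b = y₁
    · obtain ⟨rfl, rfl⟩ := hb1; exact h1
    · by_cases hb2 : a = z₀ ∧ b = y₂
      · obtain ⟨rfl, rfl⟩ := hb2; exact h2
      · exact absurd (by simp [htdef, hb1, hb2]) h
  have ht2 : ∀ a : Vert Γ,
      ∑ b ∈ Finset.univ.filter (fun b : Vert Γ => b.1 ∈ rankSet rk a.1 1), t (a, b) = 0 := by
    intro a
    by_cases ha : a = z₀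
    · subst ha
      have m1 : y₁ ∈ Finset.univ.filter (fun b : Vert Γ => b.1 ∈ rankSet rk a.1 1) := by
        simp [h1]
      have m2 : y₂ ∈ Finset.univ.filter (fun b : Vert Γ => b.1 ∈ rankSet rk a.1 1) := by
        simp [h2]
      simp only [htdef, true_and, Finset.sum_sub_distrib]
      rw [Finset.sum_ite_eq' _ y₁ (fun _ => (1 : F)),
          Finset.sum_ite_eq' _ y₂ (fun _ => (1 : F))]
      simp [m1, m2]
    · simp [htdef, ha]
  -- apply the representation
  have h1' := congrArg (auxΦ F rk t ht1 ht2) hker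
  rw [map_mul, map_zero, map_sum, aux_rxnbar_sum, map_sum] at h1'
  simp only [map_smul, auxΦ_rbar] at h1'
  -- evaluate at the base point
  have h2' := congrArg (fun g : Module.End F (F × (Vert Γ → F) × F) =>
    (g ((1 : F), 0, 0)).2.2) h1'
  simp only [Module.End.mul_apply, LinearMap.sum_apply, LinearMap.smul_apply,
    LinearMap.zero_apply] at h2'
  -- inner sum
  set u : Vert Γ → F := ∑ y ∈ T, c y • (Pi.single y 1 : Vert Γ → F) with hu
  have hinner : (∑ y ∈ T, c y • auxL F t y ((1 : F), 0, 0)) = ((0 : F), u, (0 : F)) := by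
    refine Prod.ext ?_ (Prod.ext ?_ ?_)
    · simp [Prod.fst_sum, auxL_apply]
    · rw [Prod.snd_sum, Prod.fst_sum, hu]
      apply Finset.sum_congr rfl
      intro y _
      simp [auxL_apply]
    · simp [Prod.snd_sum, auxL_apply]
  rw [hinner] at h2'
  have houter : ∀ z : Vert Γ, auxL F t z ((0 : F), u, (0 : F))
      = ((0 : F), 0, ∑ b : Vert Γ, t (z, b) * u b) := by
    intro z; rw [auxL_apply]; simp
  simp only [houter] at h2'
  rw [Prod.snd_sum, Prod.snd_sum] at h2'
  -- compute u at y₁, y₂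
  have hub : ∀ y, y ∈ T → u y = c y := by
    intro y hy
    rw [hu]
    simp only [Finset.sum_apply, Pi.smul_apply, Pi.single_apply, smul_eq_mul,
      mul_ite, mul_one, mul_zero]
    rw [Finset.sum_ite_eq T y (fun y => c y)]
    simp [hy]
  -- compute the double sum
  have hsum : (∑ z ∈ Z, ∑ b : Vert Γ, t (z, b) * u b) = c y₁ - c y₂ := by
    have hin : ∀ z : Vert Γ, (∑ b : Vert Γ, t (z, b) * u b)
        = (if z = z₀ then u y₁ else 0) - (if z = z₀ then u y₂ else 0) := by
      intro z
      by_cases hzz : z = z₀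
      · subst hzz
        simp only [htdef, true_and, sub_mul, ite_mul, one_mul, zero_mul,
          Finset.sum_sub_distrib]
        rw [Finset.sum_ite_eq' Finset.univ y₁ (fun b => u b),
            Finset.sum_ite_eq' Finset.univ y₂ (fun b => u b)]
        simp
      · simp [htdef, hzz]
    rw [Finset.sum_congr rfl (fun z _ => hin z), Finset.sum_sub_distrib]
    rw [Finset.sum_ite_eq' Z z₀ (fun _ => u y₁), Finset.sum_ite_eq' Z z₀ (fun _ => u y₂)]
    simp [hz₀Z, hub y₁ hy₁T, hub y₂ hy₂T]
  rw [hsum] at h2'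
  -- conclude
  have : c y₁ - c y₂ = 0 := by
    rw [h2']
    rfl
  exact sub_eq_zero.mp this

end AuxMain
section AuxRel

variable {F}

lemma aux_mono_zero (rk : Γ → ℕ) {z y : Vert Γ} (h : y.1 ∉ rankSet rk z.1 1) :
    rbar F rk z * rbar F rk y = 0 := by
  rw [rbar, rbar, ← map_mul, RingQuot.mkAlgHom_rel F (GRel.mono z y h), map_zero]

lemma aux_adj_zero (rk : Γ → ℕ) (z : Vert Γ) :
    rbar F rk z * rxnbar F rk z.1 1 = 0 := by
  rw [rbar, rxnbar, ← map_mul, RingQuot.mkAlgHom_rel F (GRel.adj z), map_zero]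

lemma aux_rbar_mul_rxnbar (rk : Γ → ℕ) (hrk : IsRanked rk) {x : Γ} {z : Vert Γ} {n : ℕ}
    (hz : z.1 ∈ rankSet rk x n) :
    rbar F rk z * rxnbar F rk x (n + 1) = 0 := by
  rw [aux_rxnbar_sum, Finset.mul_sum]
  rw [← Finset.sum_filter_add_sum_filter_not _ (fun y : Vert Γ => y.1 ∈ rankSet rk z.1 1)]
  have e2 : ∑ y ∈ (Finset.univ.filter
        (fun y : Vert Γ => y.1 ∈ rankSet rk x (n + 1))).filter
        (fun y : Vert Γ => ¬ y.1 ∈ rankSet rk z.1 1),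
      rbar F rk z * rbar F rk y = 0 :=
    Finset.sum_eq_zero fun y hy => aux_mono_zero rk (Finset.mem_filter.mp hy).2
  have hTP : (Finset.univ.filter
        (fun y : Vert Γ => y.1 ∈ rankSet rk x (n + 1))).filter
        (fun y : Vert Γ => y.1 ∈ rankSet rk z.1 1)
      = Finset.univ.filter (fun y : Vert Γ => y.1 ∈ rankSet rk z.1 1) := by
    ext y
    simp only [Finset.mem_filter, Finset.mem_univ, true_and]
    exact ⟨fun h => h.2, fun h => ⟨aux_rankSet_step hrk hz h, h⟩⟩
  rw [e2, add_zero, hTP, ← Finset.mul_sum, ← aux_rxnbar_sum, aux_adj_zero]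

lemma aux_rxn_mul (rk : Γ → ℕ) (hrk : IsRanked rk) (x : Γ) (n : ℕ) :
    rxnbar F rk x n * rxnbar F rk x (n + 1) = 0 := by
  rw [aux_rxnbar_sum rk x n, Finset.sum_mul]
  exact Finset.sum_eq_zero fun z hz =>
    aux_rbar_mul_rxnbar rk hrk (Finset.mem_filter.mp hz).2

lemma aux_Rnk_diag (rk : Γ → ℕ) (k : ℕ) :
    Rnk F rk k k = Submodule.span F
      (Set.range (fun y : Vert Γ => if rk y.1 = k + 1 then rbar F rk y else 0)) := by
  apply le_antisymm
  · rw [Rnk]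
    refine iSup_le fun y => iSup_le fun hy => ?_
    have hR0 : Rcomp F rk (k - k) = Submodule.span F {(1 : RGamma F rk)} := by
      rw [Rcomp, Nat.sub_self, pow_zero, Submodule.one_eq_span, Submodule.map_span]
      congr 1
      simp only [Set.image_singleton, AlgHom.toLinearMap_apply, map_one]
    rw [hR0, Submodule.map_span, Set.image_singleton, LinearMap.mulLeft_apply, mul_one]
    refine Submodule.span_le.mpr ?_
    intro v hv
    rw [Set.mem_singleton_iff] at hv
    subst hv
    exact Submodule.subset_span ⟨y, by simp [hy]⟩
  · refine Submodule.span_le.mpr ?_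
    rintro _ ⟨y, rfl⟩
    by_cases hy : rk y.1 = k + 1
    · simp only [hy, if_pos]
      refine Submodule.mem_iSup_of_mem y (Submodule.mem_iSup_of_mem hy ?_)
      refine Submodule.mem_map.mpr ⟨1, ?_, by rw [LinearMap.mulLeft_apply, mul_one]⟩
      rw [Rcomp, Nat.sub_self, pow_zero, Submodule.one_eq_span]
      exact Submodule.mem_map.mpr ⟨1, Submodule.mem_span_singleton_self 1, by simp⟩
    · simp [hy]

end AuxRel

/-- Lemma 3.7(1).  Let `Γ` be a uniform ranked poset whose
maximum element `x` has rank `d+1` (so `Γ = Γ_x`), and `R = R(Γ)`.  For every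
`0 ≤ k < d`, the set `{s ∈ R(k,k) : r_x(d−k−1)·s = 0}` equals the one-dimensional
subspace `F·r_x(d−k)` (in particular `r_x(d−k) ≠ 0` in `R`); moreover
`R(d,d) = F·r_x` is one-dimensional.  Equivalently, `H^k(R(·,k), d_Γ) ≅ F` for all
`0 ≤ k ≤ d`. -/
theorem cohomology_diagonal (rk : Γ → ℕ) (hrk : IsRanked rk) (hU : Uniform rk)
    (d : ℕ) (x : Vert Γ) (hx : ∀ y : Γ, y ≤ x.1) (hxr : rk x.1 = d + 1) :
    (∀ k : ℕ, k < d →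
      (LinearMap.ker (LinearMap.mulLeft F (rxnbar F rk x.1 (d - k - 1))) ⊓ Rnk F rk k k
          = Submodule.span F {rxnbar F rk x.1 (d - k)}) ∧
        rxnbar F rk x.1 (d - k) ≠ 0) ∧
    (Rnk F rk d d = Submodule.span F {rbar F rk x} ∧ rbar F rk x ≠ 0) := by
  classical
  constructor
  · intro k hk
    set n := d - k - 1 with hndef
    have e1 : d - k = n + 1 := by omega
    rw [e1]
    -- the set of rank-(k+1) vertices
    have hTiff : ∀ y : Γ, y ∈ rankSet rk x.1 (n + 1) ↔ rk y = k + 1 := by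
      intro y
      constructor
      · rintro ⟨-, h⟩; omega
      · intro h; exact ⟨hx y, by omega⟩
    -- a rank-(k+1) element exists
    obtain ⟨y₀, hy₀le, hy₀r⟩ := aux_exists_rank hrk (n + 1) x.1 (k + 1) (by omega)
    have y₀b : y₀ ≠ ⊥ := aux_ne_bot hrk (by omega)
    have hy₀T : (⟨y₀, y₀b⟩ : Vert Γ).1 ∈ rankSet rk x.1 (n + 1) := (hTiff y₀).mpr hy₀r
    constructor
    · apply le_antisymm
      · -- kernel ∩ R(k,k) ⊆ F·r_x(n+1)
        intro s hs
        obtain ⟨hker, hmem⟩ := Submodule.mem_inf.mp hs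
        rw [LinearMap.mem_ker, LinearMap.mulLeft_apply] at hker
        rw [aux_Rnk_diag, Submodule.mem_span_range_iff_exists_fun] at hmem
        obtain ⟨c, hc⟩ := hmem
        have hc' : ∑ y ∈ Finset.univ.filter
              (fun y : Vert Γ => y.1 ∈ rankSet rk x.1 (n + 1)),
            c y • rbar F rk y = s := by
          rw [← hc, Finset.sum_filter]
          refine Finset.sum_congr rfl fun y _ => ?_
          by_cases h : rk y.1 = k + 1 <;>
            simp [h, hTiff y.1]
        have hker' : rxnbar F rk x.1 n *
            (∑ y ∈ Finset.univ.filter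
              (fun y : Vert Γ => y.1 ∈ rankSet rk x.1 (n + 1)),
              c y • rbar F rk y) = 0 := by
          rw [hc']; exact hker
        -- coefficients are locally constant
        set cΓ : Γ → F := fun w => if h : w = ⊥ then 0 else c ⟨w, h⟩ with hcΓ
        have hloc : ∀ z ∈ rankSet rk x.1 n, ∀ u ∈ rankSet rk z 1, ∀ v ∈ rankSet rk z 1,
            cΓ u = cΓ v := by
          intro z hz u hu v hv
          have hz2 := hz.2
          have hu2 := hu.2
          have hv2 := hv.2
          have hzb : z ≠ ⊥ := aux_ne_bot hrk (by omega)
          have hub : u ≠ ⊥ := aux_ne_bot hrk (by omega)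
          have hvb : v ≠ ⊥ := aux_ne_bot hrk (by omega)
          have := aux_coeff rk x n c hrk ⟨z, hzb⟩ ⟨u, hub⟩ ⟨v, hvb⟩ hz hu hv hker'
          simpa [hcΓ, hub, hvb] using this
        have hconst := aux_uniform_const hrk hU x.1 hx n cΓ hloc
        -- all coefficients are equal
        have hceq : ∀ y : Vert Γ, y.1 ∈ rankSet rk x.1 (n + 1) →
            c y = c ⟨y₀, y₀b⟩ := by
          intro y hy
          have h1 : cΓ y.1 = cΓ y₀ := hconst y.1 hy y₀ hy₀T
          have h2 : cΓ y.1 = c y := by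
            rw [hcΓ]
            simp only [y.2, dif_neg, not_false_iff]
          have h3 : cΓ y₀ = c ⟨y₀, y₀b⟩ := by
            rw [hcΓ]
            simp only [y₀b, dif_neg, not_false_iff]
          rw [← h2, h1, h3]
        -- conclude
        have : s = c ⟨y₀, y₀b⟩ • rxnbar F rk x.1 (n + 1) := by
          rw [← hc', aux_rxnbar_sum, Finset.smul_sum]
          refine Finset.sum_congr rfl fun y hy => ?_
          rw [hceq y (Finset.mem_filter.mp hy).2]
        rw [this]
        exact Submodule.smul_mem _ _ (Submodule.mem_span_singleton_self _)
      · -- F·r_x(n+1) ⊆ kernel ∩ R(k,k)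
        rw [Submodule.span_le, Set.singleton_subset_iff]
        refine Submodule.mem_inf.mpr ⟨?_, ?_⟩
        · rw [LinearMap.mem_ker, LinearMap.mulLeft_apply]
          exact aux_rxn_mul rk hrk x.1 n
        · rw [aux_Rnk_diag, aux_rxnbar_sum]
          refine Submodule.sum_mem _ fun y hy => ?_
          have hy' := (hTiff y.1).mp (Finset.mem_filter.mp hy).2
          exact Submodule.subset_span ⟨y, by simp [hy']⟩
    · exact aux_rxnbar_ne rk x.1 (n + 1) ⟨⟨y₀, y₀b⟩, hy₀T⟩
  · constructor
    · rw [aux_Rnk_diag]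
      apply le_antisymm
      · refine Submodule.span_le.mpr ?_
        rintro _ ⟨y, rfl⟩
        by_cases hy : rk y.1 = d + 1
        · have hyx : y = x := by
            refine Subtype.ext ?_
            rcases eq_or_lt_of_le (hx y.1) with h | h
            · exact h
            · exact absurd (aux_rk_lt hrk x.1 y.1 h) (by omega)
          subst hyx
          simp only [hy, if_pos]
          exact Submodule.mem_span_singleton_self _
        · simp [hy]
      · rw [Submodule.span_le, Set.singleton_subset_iff]
        exact Submodule.subset_span ⟨x, by simp [hxr]⟩
    · exact aux_rbar_ne rk x
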